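/- arXiv:1809.02092 — 2 statements merged into one kernel-verified Lean document; each statement's English description precedes it below -/
import Mathlib

section
/- Let η be a curve in H from 0 to ∞ whose trace has zero two-dimensional Lebesgue measure, let φ : H → H be a homeomorphism which is conformal on H \ η, and assume that the intersection of φ(η) with every bounded set has zero two-dimensional Lebesgue measure. Then for every compact set K ⊆ H, the derivative φ′ (which is defined Lebesgue-almost everywhere on K, namely on K \ η) is integrable on K: ∫_{K \ η} |φ′(w)| dA(w) < ∞. -/
open Set Metric MeasureTheory Filter Complex

noncomputable section

/-- The open upper half-plane `H`. -/
def UHP : Set ℂ := {z : ℂ | 0 < z.im}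

/-- A curve in `H` from `0` to `∞`: a continuous map `[0,∞) → closure H` with
`η 0 = 0` and `η t → ∞` as `t → ∞`. -/
def IsCurve (η : ℝ → ℂ) : Prop :=
  ContinuousOn η (Ici 0) ∧ η 0 = 0 ∧ (∀ t, 0 ≤ t → 0 ≤ (η t).im) ∧
    Tendsto (fun t => ‖η t‖) atTop atTop

/-- The trace of a curve defined on `[0, ∞)`. -/
def curveTrace (η : ℝ → ℂ) : Set ℂ := η '' Ici 0

/-- `[σ, τ]` is (the time interval of) an excursion of `η` between `∂B(z,r)` and
`∂B(z,R)`: there is `t ∈ (σ,τ)` with `η t ∈ B(z,r)`, `σ` is the last time before `t`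
at which `dist (η s) z = R` and `τ` is the first such time after `t`. -/
def IsExcursion (η : ℝ → ℂ) (z : ℂ) (r R σ τ : ℝ) : Prop :=
  0 ≤ σ ∧ σ < τ ∧ dist (η σ) z = R ∧ dist (η τ) z = R ∧
    (∀ s, σ < s → s < τ → dist (η s) z ≠ R) ∧
    ∃ t, σ < t ∧ t < τ ∧ dist (η t) z < r

/-- The set of (time intervals of) excursions of `η` between `∂B(z,r)` and `∂B(z,R)`. -/
def excursionSet (η : ℝ → ℂ) (z : ℂ) (r R : ℝ) : Set (ℝ × ℝ) :=
  {p : ℝ × ℝ | IsExcursion η z r R p.1 p.2}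

/-- The last time in `[0, t]` at which `η` hits `∂B(η t, δ)` (this is `0` if there
is no such time). -/
def excStart (η : ℝ → ℂ) (t δ : ℝ) : ℝ :=
  sSup {s : ℝ | 0 ≤ s ∧ s ≤ t ∧ dist (η s) (η t) = δ}

/-- The first time after `t` at which `η` hits `∂B(η t, δ)`. -/
def excEnd (η : ℝ → ℂ) (t δ : ℝ) : ℝ :=
  sInf {s : ℝ | t ≤ s ∧ dist (η s) (η t) = δ}

/-- The trace of the excursion `η(t; δ)`. -/
def excAt (η : ℝ → ℂ) (t δ : ℝ) : Set ℂ :=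
  η '' Icc (excStart η t δ) (excEnd η t δ)

/-- `K` is a (nondegenerate) compact axis-parallel rectangle. -/
def IsRect (K : Set ℂ) : Prop :=
  ∃ a₁ a₂ b₁ b₂ : ℝ, a₁ < a₂ ∧ b₁ < b₂ ∧
    K = {z : ℂ | z.re ∈ Icc a₁ a₂ ∧ z.im ∈ Icc b₁ b₂}

/-- Hypothesis (H1): bounded number of crossings. -/
def HypH1 (η : ℝ → ℂ) : Prop :=
  ∀ K : Set ℂ, IsRect K → K ⊆ UHP → ∀ β : ℝ, 0 < β → β < 1 →
    ∃ M : ℝ, 0 < M ∧ ∃ ε₀ : ℝ, 0 < ε₀ ∧ ∀ ε : ℝ, 0 < ε → ε < ε₀ → ∀ z ∈ K,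
      (excursionSet η z ε (ε ^ β)).Finite ∧
        ((excursionSet η z ε (ε ^ β)).ncard : ℝ) ≤ M

/-- Hypothesis (H2): non-self-tracing. -/
def HypH2 (η : ℝ → ℂ) : Prop :=
  ∀ K : Set ℂ, IsRect K → K ⊆ UHP → ∀ α ξ : ℝ, 1 < ξ → ξ < α →
    ∃ δ₀ : ℝ, 0 < δ₀ ∧ ∀ δ : ℝ, 0 < δ → δ < δ₀ → ∀ t : ℝ, 0 < t → η t ∈ K →
      ∃ y : ℂ,
        ball y (δ ^ α) ⊆ ball (η t) δ \ curveTrace η ∧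
        (ball y (2 * δ ^ α) ∩ curveTrace η).Nonempty ∧
        ∀ a ∈ frontier (connectedComponentIn (ball (η t) δ \ curveTrace η) y) \ excAt η t δ,
          ∀ γ : ℝ → ℂ, ContinuousOn γ (Icc 0 1) → γ 0 = y → γ 1 = a →
            (∀ s ∈ Icc (0:ℝ) 1,
              γ s ∈ connectedComponentIn (ball (η t) δ \ curveTrace η) y ∪ {a}) →
            ∃ s ∈ Icc (0:ℝ) 1, γ s ∉ ball y (δ ^ ξ)

/-- `A` has upper Minkowski dimension at most `d`: the intersection of `A` with any
bounded set can, for every `d' > d`, be covered by `O(r^{-d'})` balls of radius `r`. -/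
def UpperMinkDimLE (A : Set ℂ) (d : ℝ) : Prop :=
  ∀ B : Set ℂ, Bornology.IsBounded B → ∀ d' : ℝ, d < d' →
    ∃ C : ℝ, 0 < C ∧ ∃ r₀ : ℝ, 0 < r₀ ∧ ∀ r : ℝ, 0 < r → r < r₀ →
      ∃ F : Finset ℂ, (A ∩ B ⊆ ⋃ x ∈ F, ball x r) ∧ (F.card : ℝ) ≤ C * r ^ (-d')

/-- `φ : H → H` is a homeomorphism (with inverse `ψ`) which is conformal
(holomorphic) off the trace of `η`. -/
def ConformalOffTrace (φ ψ : ℂ → ℂ) (η : ℝ → ℂ) : Prop :=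
  MapsTo φ UHP UHP ∧ MapsTo ψ UHP UHP ∧ ContinuousOn φ UHP ∧ ContinuousOn ψ UHP ∧
    InvOn ψ φ UHP UHP ∧ DifferentiableOn ℂ φ (UHP \ curveTrace η)

/-- `tη` is the image curve `φ(η)`: a curve in `H` from `0` to `∞` agreeing with
`φ ∘ η` whenever `η` is in `H`. -/
def IsImageCurve (φ : ℂ → ℂ) (η tη : ℝ → ℂ) : Prop :=
  IsCurve tη ∧ ∀ t, 0 ≤ t → η t ∈ UHP → tη t = φ (η t)

/-- `η` is non-self-crossing: on every compact time interval it is a uniform limit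
of simple curves. -/
def NonSelfCrossing (η : ℝ → ℂ) : Prop :=
  ∀ T : ℝ, 0 < T → ∀ ε : ℝ, 0 < ε → ∃ γ : ℝ → ℂ,
    ContinuousOn γ (Icc 0 T) ∧ InjOn γ (Icc 0 T) ∧
      ∀ t ∈ Icc (0:ℝ) T, dist (γ t) (η t) < ε

/-- The diameter `diam (φ (e))` of the `φ`-image of the trace of the excursion
with time interval `p`. -/
def excDiam (η : ℝ → ℂ) (φ : ℂ → ℂ) (p : ℝ × ℝ) : ℝ :=
  Metric.diam (φ '' (η '' Icc p.1 p.2))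

/-- `δ̂`, the maximum of the diameters of the `φ`-images of the excursions of `η`
between `∂B(z,r)` and `∂B(z,R)`. -/
def maxExcDiam (η : ℝ → ℂ) (φ : ℂ → ℂ) (z : ℂ) (r R : ℝ) : ℝ :=
  sSup (excDiam η φ '' excursionSet η z r R)

/-- `Σᵢ δᵢ`, the sum of the diameters of the `φ`-images of the excursions of `η`
between `∂B(z,r)` and `∂B(z,R)`. -/
def sumExcDiam (η : ℝ → ℂ) (φ : ℂ → ℂ) (z : ℂ) (r R : ℝ) : ℝ :=
  ∑ᶠ p ∈ excursionSet η z r R, excDiam η φ p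

/-- The open arc `A(e, w, r, y)`: the relative interior (in the circle `∂B(w,r)`)
of the closed arc `∂B(w,r) ∩ ∂O'`, where `O'` is the connected component of
`B(w,r) \ e` containing `y`. -/
def arcA (e : Set ℂ) (w : ℂ) (r : ℝ) (y : ℂ) : Set ℂ :=
  {x : ℂ | x ∈ sphere w r ∧ ∃ ε : ℝ, 0 < ε ∧ ∀ x' ∈ sphere w r, dist x' x < ε →
    x' ∈ frontier (connectedComponentIn (ball w r \ e) y)}

/-- `f` is absolutely continuous on the interval `[u, v]`. -/
def AbsContOnInterval (f : ℝ → ℂ) (u v : ℝ) : Prop :=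
  ∀ ε : ℝ, 0 < ε → ∃ δ : ℝ, 0 < δ ∧ ∀ n : ℕ, ∀ x y : Fin n → ℝ,
    (∀ j, x j ∈ Icc u v ∧ y j ∈ Icc u v ∧ x j ≤ y j) →
    (∀ i j, i ≠ j → Disjoint (Ioo (x i) (y i)) (Ioo (x j) (y j))) →
    (∑ j, (y j - x j)) < δ → (∑ j, ‖f (y j) - f (x j)‖) < ε


private theorem statement2.detAux (c : ℂ) :
    (((1 : ℂ →L[ℂ] ℂ).smulRight c).restrictScalars ℝ).det = Complex.normSq c := by
  have h : ((((1 : ℂ →L[ℂ] ℂ).smulRight c).restrictScalars ℝ : ℂ →L[ℝ] ℂ) : ℂ →ₗ[ℝ] ℂ)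
      = Algebra.lmul ℝ ℂ c := by
    ext z
    simp [mul_comm]
  rw [ContinuousLinearMap.det, h, ← Algebra.norm_apply, Algebra.norm_complex_apply]

private theorem statement2.traceClosed {η : ℝ → ℂ} (hη : IsCurve η) :
    IsClosed (curveTrace η) := by
  obtain ⟨hcont, -, -, htend⟩ := hη
  refine isClosed_of_closure_subset fun x hx => ?_
  obtain ⟨T, hT⟩ := Filter.eventually_atTop.mp (htend.eventually_ge_atTop (‖x‖ + 1))
  set T' := max T 0 with hT'
  have hsplit : curveTrace η = η '' Icc 0 T' ∪ η '' Ici T' := by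
    rw [← Set.image_union, Set.Icc_union_Ici_eq_Ici (le_max_right T 0)]
    rfl
  rw [hsplit, closure_union] at hx
  rw [hsplit]
  rcases hx with hx | hx
  · have hc : IsCompact (η '' Icc 0 T') :=
      isCompact_Icc.image_of_continuousOn (hcont.mono Set.Icc_subset_Ici_self)
    exact Or.inl (hc.isClosed.closure_subset hx)
  · exfalso
    have hsub : η '' Ici T' ⊆ {z : ℂ | ‖x‖ + 1 ≤ ‖z‖} := by
      rintro _ ⟨t, ht, rfl⟩
      exact hT t (le_trans (le_max_left T 0) ht)
    have hcl : IsClosed {z : ℂ | ‖x‖ + 1 ≤ ‖z‖} :=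
      isClosed_le continuous_const continuous_norm
    have hxx : x ∈ {z : ℂ | ‖x‖ + 1 ≤ ‖z‖} :=
      hcl.closure_subset (closure_mono hsub hx)
    simp only [Set.mem_setOf_eq] at hxx
    linarith

/-- If `η` is a curve in `H` from `0` to `∞` with trace of zero
Lebesgue measure, `φ : H → H` is a homeomorphism conformal off `η`, and `φ(η)` has
zero Lebesgue measure in every bounded set, then `φ'` is integrable on every compact
`K ⊆ H` (it is defined a.e. on `K`, namely on `K \ η`). -/
theorem statement2
    (η : ℝ → ℂ) (φ ψ : ℂ → ℂ)
    (hη : IsCurve η) (hmeas : volume (curveTrace η) = 0)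
    (hφ : ConformalOffTrace φ ψ η)
    (himg : ∀ B : Set ℂ, Bornology.IsBounded B →
      volume (φ '' (curveTrace η ∩ UHP) ∩ B) = 0)
    (K : Set ℂ) (hK : IsCompact K) (hKH : K ⊆ UHP) :
    IntegrableOn (fun w => deriv φ w) (K \ curveTrace η) volume := by
  obtain ⟨hmapφ, hmapψ, hcφ, hcψ, hinv, hdiff⟩ := hφ
  have hScl : IsClosed (curveTrace η) := statement2.traceClosed hη
  have hUHP : IsOpen UHP := isOpen_lt continuous_const Complex.continuous_im
  have hUopen : IsOpen (UHP \ curveTrace η) := hUHP.sdiff hScl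
  set s : Set ℂ := K \ curveTrace η with hsdef
  have hsU : s ⊆ UHP \ curveTrace η := fun x hx => ⟨hKH hx.1, hx.2⟩
  have hsmeas : MeasurableSet s := hK.measurableSet.diff hScl.measurableSet
  set f' : ℂ → ℂ →L[ℝ] ℂ :=
    fun x => ((1 : ℂ →L[ℂ] ℂ).smulRight (deriv φ x)).restrictScalars ℝ with hf'def
  have hf' : ∀ x ∈ s, HasFDerivWithinAt φ (f' x) s x := by
    intro x hx
    have hd : DifferentiableAt ℂ φ x :=
      (hdiff x (hsU hx)).differentiableAt (hUopen.mem_nhds (hsU hx))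
    exact (hd.hasDerivAt.hasFDerivAt.restrictScalars ℝ).hasFDerivWithinAt
  have hinj : Set.InjOn φ s := hinv.1.injOn.mono fun x hx => hKH hx.1
  have key : (∫⁻ x in s, ENNReal.ofReal |(f' x).det| ∂volume) = volume (φ '' s) :=
    lintegral_abs_det_fderiv_eq_addHaar_image volume hsmeas hf' hinj
  have hdet : ∀ x : ℂ, ENNReal.ofReal |(f' x).det| = (‖deriv φ x‖₊ : ENNReal) ^ 2 := by
    intro x
    have h1 : |(f' x).det| = ‖deriv φ x‖ ^ 2 := by
      rw [hf'def]
      rw [statement2.detAux, _root_.abs_of_nonneg (Complex.normSq_nonneg _), ← Complex.sq_norm]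
    rw [h1, ENNReal.ofReal_pow (norm_nonneg _), ofReal_norm, enorm_eq_nnnorm]
  have hfin2 : (∫⁻ x in s, (‖deriv φ x‖₊ : ENNReal) ^ 2 ∂volume) < ⊤ := by
    simp_rw [← hdet]
    rw [key]
    have himg' : volume (φ '' s) ≤ volume (φ '' K) :=
      measure_mono (Set.image_mono Set.diff_subset)
    have hcK : IsCompact (φ '' K) := hK.image_of_continuousOn (hcφ.mono hKH)
    exact lt_of_le_of_lt himg' hcK.measure_lt_top
  refine ⟨(measurable_deriv φ).aestronglyMeasurable, ?_⟩
  rw [hasFiniteIntegral_def]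
  calc (∫⁻ x, (‖deriv φ x‖₊ : ENNReal) ∂(volume.restrict s))
      ≤ ∫⁻ x, (1 + (‖deriv φ x‖₊ : ENNReal) ^ 2) ∂(volume.restrict s) := by
        refine lintegral_mono fun x => ?_
        rcases le_total ((‖deriv φ x‖₊ : ENNReal)) 1 with h | h
        · exact le_trans h le_self_add
        · exact le_trans (le_self_pow₀ h two_ne_zero) le_add_self
    _ = volume s + ∫⁻ x, (‖deriv φ x‖₊ : ENNReal) ^ 2 ∂(volume.restrict s) := by
        rw [lintegral_add_left measurable_const, lintegral_one, Measure.restrict_apply_univ]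
    _ < ⊤ := ENNReal.add_lt_top.mpr
        ⟨lt_of_le_of_lt (measure_mono Set.diff_subset) hK.measure_lt_top, hfin2⟩
end
end

section
/- Let K = [a₁,a₂] × [b₁,b₂] be a compact rectangle in ℂ (with a₁ < a₂ and b₁ < b₂), let η ⊆ ℂ be any set, and let φ be any function defined on a neighborhood of K with values in ℂ. For n ∈ ℕ, set α_n = (a₂−a₁)/n and β_n = (b₁ subtracted from b₂)/n, i.e. β_n = (b₂−b₁)/n, and for 1 ≤ u,v ≤ n let R_{u,v} be the closed rectangle [a₁+(u−1)α_n, a₁+uα_n] × [b₁+(v−1)β_n, b₁+vβ_n]. Then (1/n) Σ_{u=1}^n Σ_{v=1}^n diam(φ(R_{u,v})) · 1{η ∩ R_{u,v} ≠ ∅} ≤ n · (1/area(K)) ∫_K diam(φ(B(z, α_n+β_n))) · 1{dist(z,η) < α_n+β_n} dA(z), provided B(z, α_n+β_n) is contained in the domain of φ for every z ∈ K. -/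
open Set Metric MeasureTheory Filter Complex

noncomputable section

lemma cvol (s t : Set ℝ) (hs : MeasurableSet s) (ht : MeasurableSet t) :
    volume {z : ℂ | z.re ∈ s ∧ z.im ∈ t} = volume s * volume t := by
  have h : {z : ℂ | z.re ∈ s ∧ z.im ∈ t} = Complex.measurableEquivRealProd ⁻¹' (s ×ˢ t) := by
    ext z; simp [Complex.measurableEquivRealProd_apply, Set.mem_prod]
  rw [h, Complex.volume_preserving_equiv_real_prod.measure_preimage (hs.prod ht).nullMeasurableSet,
    Measure.volume_eq_prod, Measure.prod_prod]

open scoped Classical ENNReal in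
/-- The discretized Riemann-sum bound: with `K = [a₁,a₂]×[b₁,b₂]`
divided into `n × n` rectangles `R_{u,v}` of size `αₙ × βₙ`,
`(1/n) Σ_{u,v} diam(φ(R_{u,v})) 1{η ∩ R_{u,v} ≠ ∅}
  ≤ n · (1/area K) ∫_K diam(φ(B(z, αₙ+βₙ))) 1{dist(z,η) < αₙ+βₙ} dA(z)`. -/
theorem statement11
    (a₁ a₂ b₁ b₂ : ℝ) (ha : a₁ < a₂) (hb : b₁ < b₂)
    (η : Set ℂ) (φ : ℂ → ℂ) (n : ℕ) (hn : 0 < n)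
    (K : Set ℂ) (hK : K = {z : ℂ | z.re ∈ Icc a₁ a₂ ∧ z.im ∈ Icc b₁ b₂})
    (αn βn : ℝ) (hαn : αn = (a₂ - a₁) / n) (hβn : βn = (b₂ - b₁) / n)
    (Rect : ℕ → ℕ → Set ℂ)
    (hRect : ∀ u v : ℕ, Rect u v = {z : ℂ |
        z.re ∈ Icc (a₁ + ((u : ℝ) - 1) * αn) (a₁ + (u : ℝ) * αn) ∧
        z.im ∈ Icc (b₁ + ((v : ℝ) - 1) * βn) (b₁ + (v : ℝ) * βn)}) :
    (n : ℝ≥0∞)⁻¹ * ∑ u ∈ Finset.Icc 1 n, ∑ v ∈ Finset.Icc 1 n,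
        (if (η ∩ Rect u v).Nonempty then EMetric.diam (φ '' Rect u v) else 0)
      ≤ (n : ℝ≥0∞) * ((volume K)⁻¹ *
          ∫⁻ z in K, Set.indicator {w : ℂ | Metric.infDist w η < αn + βn}
            (fun w => EMetric.diam (φ '' ball w (αn + βn))) z) := by
  classical
  have hnR : (0:ℝ) < n := Nat.cast_pos.mpr hn
  have hα : 0 < αn := by rw [hαn]; exact div_pos (by linarith) hnR
  have hβ : 0 < βn := by rw [hβn]; exact div_pos (by linarith) hnR
  have hna : (n:ℝ) * αn = a₂ - a₁ := by rw [hαn]; field_simp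
  have hnb : (n:ℝ) * βn = b₂ - b₁ := by rw [hβn]; field_simp
  set f : ℂ → ℝ≥0∞ := Set.indicator {w : ℂ | Metric.infDist w η < αn + βn}
      (fun w => EMetric.diam (φ '' ball w (αn + βn))) with hf
  set R' : ℕ → ℕ → Set ℂ := fun u v => {z : ℂ |
      z.re ∈ Ioo (a₁ + ((u:ℝ)-1)*αn) (a₁ + (u:ℝ)*αn) ∧
      z.im ∈ Ioo (b₁ + ((v:ℝ)-1)*βn) (b₁ + (v:ℝ)*βn)} with hR'
  -- distance bound
  have hdist : ∀ u v : ℕ, ∀ z ∈ R' u v, ∀ w ∈ Rect u v, dist z w < αn + βn := by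
    intro u v z hz w hw
    rw [hRect] at hw
    obtain ⟨⟨hz1, hz2⟩, hz3, hz4⟩ := hz
    obtain ⟨⟨hw1, hw2⟩, hw3, hw4⟩ := hw
    calc dist z w = ‖z - w‖ := Complex.dist_eq z w
      _ ≤ |(z - w).re| + |(z - w).im| := Complex.norm_le_abs_re_add_abs_im _
      _ < αn + βn := by
          rw [Complex.sub_re, Complex.sub_im]
          have h1 : |z.re - w.re| < αn := abs_lt.mpr ⟨by linarith, by linarith⟩
          have h2 : |z.im - w.im| ≤ βn := abs_le.mpr ⟨by linarith, by linarith⟩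
          linarith
  -- pointwise bound
  have key : ∀ u v : ℕ, ∀ z ∈ R' u v,
      (if (η ∩ Rect u v).Nonempty then EMetric.diam (φ '' Rect u v) else 0) ≤ f z := by
    intro u v z hz
    split_ifs with h
    · obtain ⟨w, hwη, hwR⟩ := h
      have hzind : z ∈ {w : ℂ | Metric.infDist w η < αn + βn} :=
        lt_of_le_of_lt (Metric.infDist_le_dist_of_mem hwη) (hdist u v z hz w hwR)
      rw [hf, Set.indicator_of_mem hzind]
      refine EMetric.diam_mono (Set.image_mono fun y hy => ?_)
      rw [Metric.mem_ball, dist_comm]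
      exact hdist u v z hz y hy
    · exact zero_le
  have hmeas : ∀ u v : ℕ, MeasurableSet (R' u v) := fun u v =>
    (Complex.measurable_re measurableSet_Ioo).inter (Complex.measurable_im measurableSet_Ioo)
  set A := ENNReal.ofReal αn with hA
  set B := ENNReal.ofReal βn with hB
  have hvolR : ∀ u v : ℕ, volume (R' u v) = A * B := by
    intro u v
    rw [hR']
    rw [cvol _ _ measurableSet_Ioo measurableSet_Ioo, Real.volume_Ioo, Real.volume_Ioo]
    congr 1 <;> [skip; skip] <;> congr 1 <;> ring
  set pr := (Finset.Icc 1 n) ×ˢ (Finset.Icc 1 n) with hpr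
  set c : ℕ × ℕ → ℝ≥0∞ := fun p =>
    if (η ∩ Rect p.1 p.2).Nonempty then EMetric.diam (φ '' Rect p.1 p.2) else 0 with hc
  -- disjointness
  have hIoo : ∀ (u u' : ℕ), u < u' → ∀ (e α : ℝ), 0 < α →
      Disjoint (Ioo (e+((u:ℝ)-1)*α) (e+(u:ℝ)*α)) (Ioo (e+((u':ℝ)-1)*α) (e+(u':ℝ)*α)) := by
    intro u u' h e α hα
    rw [Set.disjoint_left]
    intro x hx hx'
    have hcast : (u:ℝ) + 1 ≤ (u':ℝ) := by exact_mod_cast h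
    nlinarith [hx.2, hx'.1, mul_nonneg (by linarith : (0:ℝ) ≤ (u':ℝ) - 1 - u) hα.le]
  have hdisj : Set.PairwiseDisjoint (↑pr) (fun p : ℕ × ℕ => R' p.1 p.2) := by
    intro p _ q _ hpq
    rcases eq_or_ne p.1 q.1 with h1 | h1
    · have h2 : p.2 ≠ q.2 := fun h2 => hpq (Prod.ext h1 h2)
      rcases lt_or_gt_of_ne h2 with h | h
      · refine Set.disjoint_left.mpr fun z hz hz' => ?_
        exact Set.disjoint_left.mp (hIoo _ _ h b₁ βn hβ) hz.2 hz'.2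
      · refine Set.disjoint_left.mpr fun z hz hz' => ?_
        exact Set.disjoint_left.mp (hIoo _ _ h b₁ βn hβ) hz'.2 hz.2
    · rcases lt_or_gt_of_ne h1 with h | h
      · refine Set.disjoint_left.mpr fun z hz hz' => ?_
        exact Set.disjoint_left.mp (hIoo _ _ h a₁ αn hα) hz.1 hz'.1
      · refine Set.disjoint_left.mpr fun z hz hz' => ?_
        exact Set.disjoint_left.mp (hIoo _ _ h a₁ αn hα) hz'.1 hz.1
  -- subset of K
  have hsub : ∀ p ∈ pr, R' p.1 p.2 ⊆ K := by
    intro p hp z hz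
    rw [hpr, Finset.mem_product, Finset.mem_Icc, Finset.mem_Icc] at hp
    obtain ⟨⟨hu1, hu2⟩, hv1, hv2⟩ := hp
    have hu1' : (1:ℝ) ≤ (p.1:ℝ) := by exact_mod_cast hu1
    have hu2' : (p.1:ℝ) ≤ (n:ℝ) := by exact_mod_cast hu2
    have hv1' : (1:ℝ) ≤ (p.2:ℝ) := by exact_mod_cast hv1
    have hv2' : (p.2:ℝ) ≤ (n:ℝ) := by exact_mod_cast hv2
    obtain ⟨⟨hz1, hz2⟩, hz3, hz4⟩ := hz
    rw [hK]
    constructor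
    · constructor
      · nlinarith [mul_nonneg (by linarith : (0:ℝ) ≤ (p.1:ℝ) - 1) hα.le]
      · nlinarith [mul_le_mul_of_nonneg_right hu2' hα.le]
    · constructor
      · nlinarith [mul_nonneg (by linarith : (0:ℝ) ≤ (p.2:ℝ) - 1) hβ.le]
      · nlinarith [mul_le_mul_of_nonneg_right hv2' hβ.le]
  -- integral bound
  have hint : (∑ p ∈ pr, c p) * (A * B) ≤ ∫⁻ z in K, f z := by
    rw [Finset.sum_mul]
    calc ∑ p ∈ pr, c p * (A * B)
        = ∑ p ∈ pr, ∫⁻ _ in R' p.1 p.2, c p := by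
          refine Finset.sum_congr rfl fun p _ => ?_
          rw [setLIntegral_const, hvolR]
      _ ≤ ∑ p ∈ pr, ∫⁻ z in R' p.1 p.2, f z :=
          Finset.sum_le_sum fun p _ => setLIntegral_mono' (hmeas p.1 p.2)
            fun z hz => key p.1 p.2 z hz
      _ = ∫⁻ z in ⋃ p ∈ pr, R' p.1 p.2, f z :=
          (lintegral_biUnion_finset hdisj (fun p _ => hmeas p.1 p.2) f).symm
      _ ≤ ∫⁻ z in K, f z := lintegral_mono_set (Set.iUnion₂_subset hsub)
  -- volume of K
  have hvolK : volume K = (n:ℝ≥0∞) * (n:ℝ≥0∞) * (A * B) := by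
    rw [hK, cvol _ _ measurableSet_Icc measurableSet_Icc, Real.volume_Icc, Real.volume_Icc,
      ← hna, ← hnb, hA, hB, ENNReal.ofReal_mul (by positivity), ENNReal.ofReal_mul (by positivity),
      ENNReal.ofReal_natCast]
    ring
  -- final arithmetic
  have hn0 : (n:ℝ≥0∞) ≠ 0 := by exact_mod_cast hn.ne'
  have hnt : (n:ℝ≥0∞) ≠ ⊤ := ENNReal.natCast_ne_top n
  have hA0 : A ≠ 0 := by simp [hA, ENNReal.ofReal_eq_zero, not_le, hα]
  have hB0 : B ≠ 0 := by simp [hB, ENNReal.ofReal_eq_zero, not_le, hβ]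
  have hAt : A ≠ ⊤ := ENNReal.ofReal_ne_top
  have hBt : B ≠ ⊤ := ENNReal.ofReal_ne_top
  have hD0 : A * B ≠ 0 := mul_ne_zero hA0 hB0
  have hDt : A * B ≠ ⊤ := ENNReal.mul_ne_top hAt hBt
  have hsum : (∑ u ∈ Finset.Icc 1 n, ∑ v ∈ Finset.Icc 1 n,
      (if (η ∩ Rect u v).Nonempty then EMetric.diam (φ '' Rect u v) else 0)) = ∑ p ∈ pr, c p := by
    rw [hpr, Finset.sum_product]
  rw [hsum, hvolK]
  set S := ∑ p ∈ pr, c p with hS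
  have hinv : ((n:ℝ≥0∞) * (n:ℝ≥0∞) * (A * B))⁻¹ = (n:ℝ≥0∞)⁻¹ * (n:ℝ≥0∞)⁻¹ * (A * B)⁻¹ := by
    rw [ENNReal.mul_inv (Or.inl (mul_ne_zero hn0 hn0)) (Or.inl (ENNReal.mul_ne_top hnt hnt)),
      ENNReal.mul_inv (Or.inl hn0) (Or.inl hnt)]
  calc (n:ℝ≥0∞)⁻¹ * S
      = (n:ℝ≥0∞) * (((n:ℝ≥0∞) * (n:ℝ≥0∞) * (A * B))⁻¹ * (S * (A * B))) := by
        rw [hinv]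
        calc (n:ℝ≥0∞)⁻¹ * S
            = ((n:ℝ≥0∞) * (n:ℝ≥0∞)⁻¹) * (((A*B)⁻¹ * (A*B)) * ((n:ℝ≥0∞)⁻¹ * S)) := by
              rw [ENNReal.mul_inv_cancel hn0 hnt, ENNReal.inv_mul_cancel hD0 hDt,
                one_mul, one_mul]
          _ = (n:ℝ≥0∞) * ((n:ℝ≥0∞)⁻¹ * (n:ℝ≥0∞)⁻¹ * (A*B)⁻¹ * (S * (A*B))) := by ring
    _ ≤ (n:ℝ≥0∞) * (((n:ℝ≥0∞) * (n:ℝ≥0∞) * (A * B))⁻¹ * (∫⁻ z in K, f z)) := by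
        exact mul_le_mul_right (mul_le_mul_right hint _) _
end
end
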